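/- arXiv:1910.02627 — 4 statements merged into one kernel-verified Lean document; each statement's English description precedes it below -/
import Mathlib

section
/- Let f and g be real polynomials with only real roots and positive leading coefficients, and let p, q be natural numbers. Then f (p,q)-interlaces g (i.e., r_{i+p}(g) ≤ r_i(f) ≤ r_{i-q}(g) for all integers i, with the conventions r_i = +∞ for i < 1 and r_i = -∞ for i > deg) if and only if for every real number r, the difference n(f,r) - n(g,r) satisfies -p ≤ n(f,r) - n(g,r) ≤ q, where n(h,r) denotes the number of roots of h (with multiplicity) in the interval [r,+∞). -/
open Polynomial in
/-- The `i`-th element (1-indexed) of a list, as an `EReal`, with the convention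
that it is `+∞` for `i < 1` and `-∞` past the end of the list. -/
noncomputable def seqOf (L : List ℝ) (i : ℤ) : EReal :=
  if i < 1 then ⊤ else (L[(i - 1).toNat]?).elim ⊥ (fun x => (x : EReal))

open Polynomial in
/-- `rSeq f i` is the `i`-th root of `f`, roots listed in non-increasing order,
with `r_i = +∞` for `i < 1` and `r_i = -∞` for `i` beyond the number of roots. -/
noncomputable def rSeq (f : Polynomial ℝ) (i : ℤ) : EReal :=
  seqOf (f.roots.sort (· ≥ ·)) i

open Polynomial in
/-- `f` `(p,q)`-interlaces `g` : `r_{i+p}(g) ≤ r_i(f) ≤ r_{i-q}(g)` for all `i`. -/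
def PQInt (p q : ℕ) (f g : Polynomial ℝ) : Prop :=
  ∀ i : ℤ, rSeq g (i + p) ≤ rSeq f i ∧ rSeq f i ≤ rSeq g (i - q)

open Polynomial in
/-- `f` is real-rooted with positive leading coefficient. -/
def RR (f : Polynomial ℝ) : Prop :=
  0 < f.leadingCoeff ∧ f.roots.card = f.natDegree

open Polynomial in
/-- number of roots of `f` (with multiplicity) in `[r, ∞)`. -/
noncomputable def nRoots (f : Polynomial ℝ) (r : ℝ) : ℕ :=
  (f.roots.filter (fun x => r ≤ x)).card

/-- `i`-th largest eigenvalue of a Hermitian matrix, as an `EReal`,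
with conventions `λ_i = +∞` for `i < 1` and `λ_i = -∞` for `i > n`. -/
noncomputable def eigSeq {m : Type*} [Fintype m] [DecidableEq m]
    {M : Matrix m m ℂ} (hM : M.IsHermitian) (i : ℤ) : EReal :=
  seqOf ((Finset.univ.val.map hM.eigenvalues).sort (· ≥ ·)) i

/-- positive index of inertia: number of positive eigenvalues. -/
noncomputable def posIdx {m : Type*} [Fintype m] [DecidableEq m]
    {M : Matrix m m ℂ} (hM : M.IsHermitian) : ℕ :=
  (Finset.univ.filter (fun i => 0 < hM.eigenvalues i)).card

/-- negative index of inertia: number of negative eigenvalues. -/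
noncomputable def negIdx {m : Type*} [Fintype m] [DecidableEq m]
    {M : Matrix m m ℂ} (hM : M.IsHermitian) : ℕ :=
  (Finset.univ.filter (fun i => hM.eigenvalues i < 0)).card

/-- characteristic polynomial of `M` equals the real polynomial `f` (coerced to `ℂ`). -/
def HasCharpoly {m : Type*} [Fintype m] [DecidableEq m]
    (M : Matrix m m ℂ) (f : Polynomial ℝ) : Prop :=
  M.charpoly = f.map (algebraMap ℝ ℂ)

open Polynomial in
lemma seqOf_cases (L : List ℝ) (j : ℤ) :
    seqOf L j = ⊤ ∨ seqOf L j = ⊥ ∨ ∃ c : ℝ, seqOf L j = (c : EReal) := by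
  unfold seqOf
  split
  · exact Or.inl rfl
  · cases h : L[(j - 1).toNat]? with
    | none => simp
    | some c => exact Or.inr (Or.inr ⟨c, by simp⟩)

lemma seqOf_top_iff (L : List ℝ) (j : ℤ) : seqOf L j = ⊤ ↔ j < 1 := by
  unfold seqOf
  split
  · simpa
  · cases h : L[(j - 1).toNat]? with
    | none => simpa using ‹¬ j < 1›
    | some c => simp only [Option.elim, EReal.coe_ne_top, false_iff]; omega

lemma key (L : List ℝ) (hL : L.Pairwise (· ≥ ·)) (r : ℝ) (i : ℤ) :
    (r : EReal) ≤ seqOf L i ↔ i ≤ ((L.filter (fun x => decide (r ≤ x))).length : ℤ) := by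
  by_cases hi : i < 1
  · simp only [seqOf, if_pos hi, le_top, true_iff]
    omega
  · have hk : i = ((i - 1).toNat : ℤ) + 1 := by omega
    set k := (i - 1).toNat with hkdef
    rw [seqOf, if_neg hi]
    by_cases hk2 : k < L.length
    · rw [List.getElem?_eq_getElem hk2]
      simp only [Option.elim, EReal.coe_le_coe_iff]
      constructor
      · intro hr
        have htake : ∀ x ∈ L.take (k + 1), decide (r ≤ x) = true := by
          intro x hx
          obtain ⟨j, hj, hxj⟩ := List.mem_iff_getElem.mp hx
          have hjlen : j < L.length := lt_of_lt_of_le hj (by simp)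
          have hjk : j ≤ k := by
            have := hj.trans_le (List.length_take_le (k+1) L)
            omega
          have : L.get ⟨j, hjlen⟩ ≥ L.get ⟨k, hk2⟩ :=
            hL.rel_get_of_le (by simpa using hjk)
          simp only [List.getElem_take] at hxj
          subst hxj
          simpa using le_trans hr this
        have := (List.filter_eq_self.mpr htake)
        have hlen : ((L.take (k+1)).filter (fun x => decide (r ≤ x))).length = k + 1 := by
          rw [this, List.length_take]
          omega
        have hsub : ((L.take (k+1)).filter (fun x => decide (r ≤ x))).length ≤
            (L.filter (fun x => decide (r ≤ x))).length :=
          ((List.take_sublist (k+1) L).filter _).length_le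
        omega
      · intro hlen
        by_contra hr
        push_neg at hr
        have hdrop : (L.drop k).filter (fun x => decide (r ≤ x)) = [] := by
          rw [List.filter_eq_nil_iff]
          intro x hx
          obtain ⟨j, hj, hxj⟩ := List.mem_iff_getElem.mp hx
          have hjlen : k + j < L.length := by
            have := hj.trans_le (List.length_drop (i := k) (l := L)).le
            omega
          have : L.get ⟨k + j, hjlen⟩ ≤ L.get ⟨k, hk2⟩ :=
            hL.rel_get_of_le (by simp)
          rw [List.getElem_drop] at hxj
          subst hxj
          simp only [decide_eq_true_eq]
          intro hc
          exact absurd (le_trans hc this) (not_le.mpr hr)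
        have hsplit : L.filter (fun x => decide (r ≤ x)) =
            (L.take k).filter (fun x => decide (r ≤ x)) ++
            (L.drop k).filter (fun x => decide (r ≤ x)) := by
          rw [← List.filter_append, List.take_append_drop]
        have : (L.filter (fun x => decide (r ≤ x))).length ≤ k := by
          rw [hsplit, List.length_append, hdrop]
          simpa using (List.length_filter_le _ (L.take k)).trans (by simp)
        omega
    · rw [List.getElem?_eq_none (by omega)]
      simp only [Option.elim, le_bot_iff, EReal.coe_ne_bot, false_iff]
      have : (L.filter (fun x => decide (r ≤ x))).length ≤ L.length :=
        List.length_filter_le _ _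
      omega

lemma keyR (f : Polynomial ℝ) (r : ℝ) (i : ℤ) :
    (r : EReal) ≤ rSeq f i ↔ i ≤ (nRoots f r : ℤ) := by
  rw [rSeq, key _ (f.roots.pairwise_sort (· ≥ ·)) r i]
  congr 1
  have : nRoots f r = ((f.roots.sort (· ≥ ·)).filter (fun x => decide (r ≤ x))).length := by
    rw [nRoots]
    conv_lhs => rw [← Multiset.sort_eq f.roots (· ≥ ·), Multiset.filter_coe,
      Multiset.coe_card]
  omega

lemma rSeq_cases (f : Polynomial ℝ) (j : ℤ) :
    rSeq f j = ⊤ ∨ rSeq f j = ⊥ ∨ ∃ c : ℝ, rSeq f j = (c : EReal) := seqOf_cases _ _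

lemma rSeq_top_iff (f : Polynomial ℝ) (j : ℤ) : rSeq f j = ⊤ ↔ j < 1 := seqOf_top_iff _ _

lemma main (F G : Polynomial ℝ) (p : ℕ) :
    (∀ i : ℤ, rSeq G (i + p) ≤ rSeq F i) ↔
      ∀ r : ℝ, (nRoots G r : ℤ) ≤ (nRoots F r : ℤ) + p := by
  constructor
  · intro h r
    set k : ℤ := (nRoots G r : ℤ) with hk
    have h1 : (r : EReal) ≤ rSeq G k := (keyR G r k).mpr le_rfl
    have h2 : (r : EReal) ≤ rSeq F (k - p) := by
      refine le_trans ?_ (h (k - p))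
      have : k - (p : ℤ) + p = k := by ring
      rw [this]
      exact h1
    have := (keyR F r (k - p)).mp h2
    omega
  · intro h i
    by_contra hc
    push_neg at hc
    rcases rSeq_cases G (i + p) with hT | hB | ⟨c, hC⟩
    · have : i + (p : ℤ) < 1 := (rSeq_top_iff G (i + p)).mp hT
      have : rSeq F i = ⊤ := (rSeq_top_iff F i).mpr (by omega)
      rw [hT, this] at hc
      exact lt_irrefl _ hc
    · rw [hB] at hc
      exact not_lt_bot hc
    · rw [hC] at hc
      have h1 : (c : EReal) ≤ rSeq G (i + p) := le_of_eq hC.symm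
      have h2 : ¬ (c : EReal) ≤ rSeq F i := not_le.mpr hc
      have h3 := (keyR G c (i + p)).mp h1
      have h4 := fun h' => h2 ((keyR F c i).mpr h')
      have h5 : ¬ (i ≤ (nRoots F c : ℤ)) := h4
      have := h c
      omega

theorem stmt0aux (f g : Polynomial ℝ) (p q : ℕ) :
    (∀ i : ℤ, rSeq g (i + p) ≤ rSeq f i ∧ rSeq f i ≤ rSeq g (i - q)) ↔
      ∀ r : ℝ, -(p : ℤ) ≤ (nRoots f r : ℤ) - (nRoots g r : ℤ) ∧
        (nRoots f r : ℤ) - (nRoots g r : ℤ) ≤ q := by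
  have e2 : (∀ i : ℤ, rSeq f i ≤ rSeq g (i - q)) ↔ (∀ j : ℤ, rSeq f (j + q) ≤ rSeq g j) := by
    constructor
    · intro h j
      have := h (j + q)
      simpa using this
    · intro h i
      have := h (i - q)
      have e : i - (q : ℤ) + q = i := by ring
      rwa [e] at this
  constructor
  · intro h r
    have h1 := (main f g p).mp (fun i => (h i).1) r
    have h2 := (main g f q).mp (e2.mp (fun i => (h i).2)) r
    omega
  · intro h i
    constructor
    · exact (main f g p).mpr (fun r => by have := (h r).1; omega) i
    · exact e2.mpr ((main g f q).mpr (fun r => by have := (h r).2; omega)) i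

theorem stmt0 (f g : Polynomial ℝ) (hf : RR f) (hg : RR g) (p q : ℕ) :
    PQInt p q f g ↔
      ∀ r : ℝ, -(p : ℤ) ≤ (nRoots f r : ℤ) - (nRoots g r : ℤ) ∧
        (nRoots f r : ℤ) - (nRoots g r : ℤ) ≤ q := by
  rw [PQInt]
  exact stmt0aux f g p q
end

section
/- Let f, g, h be real polynomials with only real roots and positive leading coefficients, and let p, q be natural numbers. Then f (p,q)-interlaces g if and only if fh (p,q)-interlaces gh. -/
-- general EReal fact
lemma ereal_le_iff (a b : EReal) : a ≤ b ↔ ∀ x : ℝ, (x : EReal) ≤ a → (x : EReal) ≤ b := by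
  constructor
  · intro hab x hx; exact hx.trans hab
  · intro H
    induction a with
    | bot => exact bot_le
    | coe y => exact H y le_rfl
    | top =>
      induction b with
      | bot => simpa using H 0 le_top
      | coe z =>
        have := H (z + 1) le_top
        rw [EReal.coe_le_coe_iff] at this
        linarith
      | top => exact le_rfl

-- key counting lemma for sorted lists
lemma countP_get (x : ℝ) : ∀ (L : List ℝ), L.Pairwise (· ≥ ·) → ∀ k : ℕ,
    (k + 1 ≤ L.countP (fun y => decide (x ≤ y))) ↔ ∃ y, L[k]? = some y ∧ x ≤ y := by
  intro L
  induction L with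
  | nil => intro _ k; simp
  | cons a t ih =>
    intro hs k
    have ht : t.Pairwise (· ≥ ·) := hs.of_cons
    have hall : ∀ y ∈ t, y ≤ a := fun y hy => (List.pairwise_cons.1 hs).1 y hy
    cases k with
    | zero =>
      rw [List.countP_cons]
      by_cases hxa : x ≤ a
      · simp [hxa]
      · have h0 : t.countP (fun y => decide (x ≤ y)) = 0 := by
          rw [List.countP_eq_zero]
          intro y hy
          simp only [decide_eq_true_eq]
          exact fun hxy => hxa (hxy.trans (hall y hy))
        simp [hxa, h0]
    | succ k =>
      rw [List.countP_cons]
      have hget : (a :: t)[k + 1]? = t[k]? := rfl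
      rw [hget]
      by_cases hxa : x ≤ a
      · simp only [hxa, decide_true, if_pos]
        rw [show (k + 1 + 1 ≤ t.countP (fun y => decide (x ≤ y)) + 1) ↔
            (k + 1 ≤ t.countP (fun y => decide (x ≤ y))) by omega]
        exact ih ht k
      · have h0 : t.countP (fun y => decide (x ≤ y)) = 0 := by
          rw [List.countP_eq_zero]
          intro y hy
          simp only [decide_eq_true_eq]
          exact fun hxy => hxa (hxy.trans (hall y hy))
        simp only [hxa, decide_false, Bool.false_eq_true, if_false, h0]
        constructor
        · intro hle; omega
        · rintro ⟨y, hy, hxy⟩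
          exact absurd (hxy.trans (hall y (List.mem_of_getElem? hy))) hxa

lemma seq_le (L : List ℝ) (hL : L.Pairwise (· ≥ ·)) (i : ℤ) (x : ℝ) :
    (x : EReal) ≤ seqOf L i ↔ i ≤ (L.countP (fun y => decide (x ≤ y)) : ℤ) := by
  unfold seqOf
  by_cases hi : i < 1
  · simp only [if_pos hi]
    constructor
    · intro _; omega
    · intro _; exact le_top
  · simp only [if_neg hi]
    push_neg at hi
    have hk : i = ((i - 1).toNat : ℤ) + 1 := by omega
    set k := (i - 1).toNat with hkdef
    rw [hk]
    rw [show (((k : ℤ) + 1 ≤ (L.countP (fun y => decide (x ≤ y)) : ℤ)) ↔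
        (k + 1 ≤ L.countP (fun y => decide (x ≤ y)))) by exact_mod_cast Iff.rfl]
    rw [countP_get x L hL k]
    cases hget : L[k]? with
    | none => simp [hget]
    | some y => simp [hget, EReal.coe_le_coe_iff]

lemma nRoots_eq (f : Polynomial ℝ) (x : ℝ) :
    nRoots f x = (f.roots.sort (· ≥ ·)).countP (fun y => decide (x ≤ y)) := by
  unfold nRoots
  rw [← Multiset.countP_eq_card_filter]
  conv_lhs => rw [← Multiset.sort_eq (s := f.roots) (r := (· ≥ ·))]
  rw [Multiset.coe_countP]

lemma rseq_le_rseq (f g : Polynomial ℝ) (i j : ℤ) :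
    rSeq f i ≤ rSeq g j ↔ ∀ x : ℝ, i ≤ (nRoots f x : ℤ) → j ≤ (nRoots g x : ℤ) := by
  have hf := Multiset.pairwise_sort (s := f.roots) (r := (· ≥ ·))
  have hg := Multiset.pairwise_sort (s := g.roots) (r := (· ≥ ·))
  unfold rSeq
  rw [ereal_le_iff]
  apply forall_congr'
  intro x
  rw [seq_le _ hf, seq_le _ hg, ← nRoots_eq, ← nRoots_eq]


lemma pq_iff (p q : ℕ) (f g : Polynomial ℝ) :
    PQInt p q f g ↔ ∀ x : ℝ,
      (nRoots g x : ℤ) ≤ nRoots f x + p ∧ (nRoots f x : ℤ) ≤ nRoots g x + q := by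
  unfold PQInt
  constructor
  · intro H x
    constructor
    · have h1 := (H ((nRoots g x : ℤ) - p)).1
      rw [rseq_le_rseq] at h1
      have h2 := h1 x (by omega)
      omega
    · have h1 := (H (nRoots f x : ℤ)).2
      rw [rseq_le_rseq] at h1
      have h2 := h1 x (by omega)
      omega
  · intro H i
    constructor
    · rw [rseq_le_rseq]
      intro x hx
      have := (H x).1
      omega
    · rw [rseq_le_rseq]
      intro x hx
      have := (H x).2
      omega

lemma nRoots_mul (f h : Polynomial ℝ) (hf : f ≠ 0) (hh : h ≠ 0) (x : ℝ) :
    nRoots (f * h) x = nRoots f x + nRoots h x := by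
  unfold nRoots
  rw [Polynomial.roots_mul (mul_ne_zero hf hh), Multiset.filter_add, Multiset.card_add]

theorem stmt1 (f g h : Polynomial ℝ) (hf : RR f) (hg : RR g) (hh : RR h) (p q : ℕ) :
    PQInt p q f g ↔ PQInt p q (f * h) (g * h) := by
  have hf0 : f ≠ 0 := fun e => by simp [RR, e] at hf
  have hg0 : g ≠ 0 := fun e => by simp [RR, e] at hg
  have hh0 : h ≠ 0 := fun e => by simp [RR, e] at hh
  rw [pq_iff, pq_iff]
  apply forall_congr'
  intro x
  rw [nRoots_mul f h hf0 hh0, nRoots_mul g h hg0 hh0]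
  push_cast
  constructor <;> rintro ⟨a, b⟩ <;> constructor <;> omega
end

section
/- Suppose f (p,q)-interlaces g, and let 0 ≤ s ≤ p and 0 ≤ t ≤ q. Set k = max{deg f - t, deg g - p + s} and m = min{deg f + s, deg g + q - t}. Then for each integer d with k ≤ d ≤ m, there exists a monic real-rooted polynomial h of degree d such that f (s,t)-interlaces h and h (p-s, q-t)-interlaces g. -/
section stmt4aux
open Polynomial

lemma seqOf_neg {L : List ℝ} {i : ℤ} (h : i < 1) : seqOf L i = ⊤ := if_pos h

lemma seqOf_pos {L : List ℝ} {i : ℤ} (h : 1 ≤ i) :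
    seqOf L i = (L[(i - 1).toNat]?).elim ⊥ (fun x => (x : EReal)) :=
  if_neg (not_lt.2 h)

lemma seqOf_bot {L : List ℝ} {i : ℤ} (h : (L.length : ℤ) < i) : seqOf L i = ⊥ := by
  have h1 : 1 ≤ i := by omega
  rw [seqOf_pos h1, List.getElem?_eq_none (by omega)]
  rfl

lemma seqOf_get {L : List ℝ} {i : ℤ} (h1 : 1 ≤ i) (h2 : i ≤ L.length) :
    ∃ hlt : (i - 1).toNat < L.length, seqOf L i = (L.get ⟨(i - 1).toNat, hlt⟩ : ℝ) := by
  have hlt : (i - 1).toNat < L.length := by omega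
  refine ⟨hlt, ?_⟩
  rw [seqOf_pos h1, List.getElem?_eq_getElem hlt]
  rfl

lemma seqOf_mem {L : List ℝ} {i : ℤ} (h1 : 1 ≤ i) (h2 : i ≤ L.length) :
    ∃ x ∈ L, seqOf L i = (x : EReal) := by
  obtain ⟨hlt, hv⟩ := seqOf_get h1 h2
  exact ⟨_, List.get_mem _ _, hv⟩

lemma seqOf_antitone {L : List ℝ} (hL : L.Pairwise (· ≥ ·)) : Antitone (seqOf L) := by
  intro i j hij
  rcases lt_or_ge i 1 with hi | hi
  · rw [seqOf_neg hi]; exact le_top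
  have hj : 1 ≤ j := hi.trans hij
  rcases lt_or_ge (L.length : ℤ) j with hjl | hjl
  · rw [seqOf_bot hjl]; exact bot_le
  have hil : i ≤ (L.length : ℤ) := hij.trans hjl
  obtain ⟨hi', hvi⟩ := seqOf_get hi hil
  obtain ⟨hj', hvj⟩ := seqOf_get hj hjl
  rw [hvi, hvj, EReal.coe_le_coe_iff]
  rcases eq_or_lt_of_le (show (i-1).toNat ≤ (j-1).toNat by omega) with heq | hlt
  · simp only [heq]; exact le_refl _
  · exact hL.rel_get_of_lt (a := ⟨(i-1).toNat, hi'⟩) (b := ⟨(j-1).toNat, hj'⟩) (Fin.mk_lt_mk.2 hlt)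

lemma rSeq_neg {f : Polynomial ℝ} {i : ℤ} (h : i < 1) : rSeq f i = ⊤ := seqOf_neg h

lemma rSeq_ne_top {f : Polynomial ℝ} {i : ℤ} (h : 1 ≤ i) : rSeq f i ≠ ⊤ := by
  rw [rSeq, seqOf_pos h]
  cases (f.roots.sort (· ≥ ·))[(i - 1).toNat]? with
  | none => exact bot_ne_top
  | some x => exact EReal.coe_ne_top x

lemma rSeq_antitone (f : Polynomial ℝ) : Antitone (rSeq f) :=
  seqOf_antitone (Multiset.pairwise_sort _ _)

lemma rSeq_bot {f : Polynomial ℝ} (hf : f.roots.card = f.natDegree) {i : ℤ}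
    (h : (f.natDegree : ℤ) < i) : rSeq f i = ⊥ := by
  apply seqOf_bot
  rw [Multiset.length_sort, hf]
  exact h

lemma le_rSeq {f : Polynomial ℝ} (hfc : f.roots.card = f.natDegree) {B : ℝ}
    (hB : ∀ x ∈ f.roots, B ≤ x) {i : ℤ} (h : i ≤ (f.natDegree : ℤ)) :
    (B : EReal) ≤ rSeq f i := by
  rcases lt_or_ge i 1 with hi | hi
  · rw [rSeq_neg hi]; exact le_top
  · obtain ⟨x, hx, hxe⟩ := seqOf_mem (L := f.roots.sort (· ≥ ·)) hi
      (by rw [Multiset.length_sort, hfc]; exact h)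
    rw [rSeq, hxe, EReal.coe_le_coe_iff]
    exact hB x (Multiset.mem_sort _ |>.1 hx)

end stmt4aux

open Polynomial in
theorem stmt4 (f g : Polynomial ℝ) (hf : RR f) (hg : RR g) (p q s t : ℕ)
    (hs : s ≤ p) (ht : t ≤ q) (hfg : PQInt p q f g) (d : ℕ)
    (hk : max ((f.natDegree : ℤ) - t) ((g.natDegree : ℤ) - p + s) ≤ (d : ℤ))
    (hm : (d : ℤ) ≤ min ((f.natDegree : ℤ) + s) ((g.natDegree : ℤ) + q - t)) :
    ∃ h : Polynomial ℝ, h.Monic ∧ h.roots.card = h.natDegree ∧ h.natDegree = d ∧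
      PQInt s t f h ∧ PQInt (p - s) (q - t) h g := by
  classical
  obtain ⟨hfl, hfc⟩ := hf
  obtain ⟨hgl, hgc⟩ := hg
  obtain ⟨B, hBf, hBg⟩ : ∃ B : ℝ, (∀ x ∈ f.roots, B ≤ x) ∧ (∀ x ∈ g.roots, B ≤ x) := by
    refine ⟨-(((f.roots + g.roots).map (fun x => |x|)).sum), ?_, ?_⟩ <;>
    · intro x hx
      have h1 : |x| ≤ ((f.roots + g.roots).map (fun x => |x|)).sum :=
        Multiset.single_le_sum (fun y hy => by
          obtain ⟨z, _, rfl⟩ := Multiset.mem_map.1 hy; exact abs_nonneg z) _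
          (Multiset.mem_map_of_mem _ (by simp [hx]))
      have h2 := neg_abs_le x
      linarith
  have hd1 : (f.natDegree : ℤ) - t ≤ d := le_trans (le_max_left _ _) hk
  have hd2 : (g.natDegree : ℤ) - p + s ≤ d := le_trans (le_max_right _ _) hk
  have hd3 : (d : ℤ) ≤ (f.natDegree : ℤ) + s := le_trans hm (min_le_left _ _)
  have hd4 : (d : ℤ) ≤ (g.natDegree : ℤ) + q - t := le_trans hm (min_le_right _ _)
  set c : ℤ → ℝ := fun j =>
    (max (max (rSeq f (j + t)) (rSeq g (j + p - s))) ((B - j : ℝ) : EReal)).toReal with hc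
  have hcoe : ∀ j : ℤ, 1 ≤ j →
      ((c j : ℝ) : EReal)
        = max (max (rSeq f (j + t)) (rSeq g (j + p - s))) ((B - j : ℝ) : EReal) := by
    intro j hj
    simp only [hc]
    apply EReal.coe_toReal
    · have h1 : rSeq f (j + t) < ⊤ := lt_top_iff_ne_top.2 (rSeq_ne_top (by omega))
      have h2 : rSeq g (j + p - s) < ⊤ := lt_top_iff_ne_top.2 (rSeq_ne_top (by omega))
      exact (max_lt (max_lt h1 h2) (EReal.coe_lt_top _)).ne
    · exact ((EReal.bot_lt_coe _).trans_le (le_max_right _ _)).ne'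
  have hmono : ∀ j1 j2 : ℤ, 1 ≤ j1 → j1 ≤ j2 → c j2 ≤ c j1 := by
    intro j1 j2 h1 h12
    rw [← EReal.coe_le_coe_iff, hcoe j1 h1, hcoe j2 (h1.trans h12)]
    refine max_le_max (max_le_max ?_ ?_) ?_
    · exact rSeq_antitone f (by omega)
    · exact rSeq_antitone g (by omega)
    · exact EReal.coe_le_coe_iff.2 (by
        have : (j1 : ℝ) ≤ (j2 : ℝ) := by exact_mod_cast h12
        linarith)
  have hL1 : ∀ j : ℤ, 1 ≤ j → rSeq f (j + t) ≤ (c j : EReal) := fun j hj => by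
    rw [hcoe j hj]; exact le_max_of_le_left (le_max_left _ _)
  have hL2 : ∀ j : ℤ, 1 ≤ j → rSeq g (j + p - s) ≤ (c j : EReal) := fun j hj => by
    rw [hcoe j hj]; exact le_max_of_le_left (le_max_right _ _)
  have hBle : ∀ j : ℤ, 1 ≤ j → ((B - j : ℝ) : EReal) ≤ (B : EReal) := by
    intro j hj
    apply EReal.coe_le_coe_iff.2
    have : (1 : ℝ) ≤ (j : ℝ) := by exact_mod_cast hj
    linarith
  have hU1 : ∀ j : ℤ, 1 ≤ j → j ≤ (d : ℤ) → (c j : EReal) ≤ rSeq f (j - s) := by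
    intro j hj hjd
    rw [hcoe j hj]
    refine max_le (max_le ?_ ?_) ?_
    · exact rSeq_antitone f (by omega)
    · have h2 := (hfg (j - s)).1
      have heq : j - (s : ℤ) + p = j + p - s := by ring
      rwa [heq] at h2
    · exact le_trans (hBle j hj) (le_rSeq hfc hBf (by omega))
  have hU2 : ∀ j : ℤ, 1 ≤ j → j ≤ (d : ℤ) → (c j : EReal) ≤ rSeq g (j - q + t) := by
    intro j hj hjd
    rw [hcoe j hj]
    refine max_le (max_le ?_ ?_) ?_
    · have h2 := (hfg (j + t)).2
      have heq : j + (t : ℤ) - q = j - q + t := by ring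
      rwa [heq] at h2
    · exact rSeq_antitone g (by omega)
    · exact le_trans (hBle j hj) (le_rSeq hgc hBg (by omega))
  set L : List ℝ := (List.range d).map (fun j : ℕ => c ((j : ℤ) + 1)) with hLdef
  have hLlen : L.length = d := by simp [hLdef]
  have hLsorted : L.Pairwise (· ≥ ·) := by
    refine List.Pairwise.map _ ?_ (List.pairwise_lt_range (n := d))
    intro a b hab
    exact hmono ((a : ℤ) + 1) ((b : ℤ) + 1) (by omega) (by omega)
  refine ⟨((L : Multiset ℝ).map fun a => X - C a).prod, ?_, ?_, ?_, ?_, ?_⟩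
  case _ => exact monic_multiset_prod_of_monic _ _ fun a _ => monic_X_sub_C a
  all_goals
    have hProots : (((L : Multiset ℝ).map fun a => X - C a).prod).roots = (L : Multiset ℝ) :=
      roots_multiset_prod_X_sub_C _
  all_goals
    have hPdeg : (((L : Multiset ℝ).map fun a => X - C a).prod).natDegree = d := by
      rw [natDegree_multiset_prod_X_sub_C_eq_card, Multiset.coe_card, hLlen]
  case _ => rw [hProots, hPdeg, Multiset.coe_card, hLlen]
  case _ => exact hPdeg
  all_goals
    have hPsort : ((((L : Multiset ℝ).map fun a => X - C a).prod).roots).sort (· ≥ ·) = L := by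
      refine List.Perm.eq_of_pairwise' (Multiset.pairwise_sort _ _) hLsorted ?_
      rw [← Multiset.coe_eq_coe, Multiset.sort_eq, hProots]
  all_goals
    have hrP : ∀ i : ℤ, 1 ≤ i → i ≤ (d : ℤ) →
        rSeq (((L : Multiset ℝ).map fun a => X - C a).prod) i = ((c i : ℝ) : EReal) := by
      intro i h1 h2
      have hlt : (i - 1).toNat < d := by omega
      have hget : L[(i - 1).toNat]? = some (c i) := by
        have hix : ((i - 1).toNat : ℤ) + 1 = i := by omega
        rw [hLdef, List.getElem?_map, List.getElem?_range hlt, Option.map_some, hix]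
      rw [rSeq, hPsort, seqOf_pos h1, hget]
      rfl
  all_goals
    have hrPbot : ∀ i : ℤ, (d : ℤ) < i →
        rSeq (((L : Multiset ℝ).map fun a => X - C a).prod) i = ⊥ := by
      intro i hi
      rw [rSeq, hPsort]
      exact seqOf_bot (by rw [hLlen]; exact hi)
  -- PQInt s t f h
  case _ =>
    intro i
    constructor
    · rcases lt_or_ge (i + (s : ℤ)) 1 with h1 | h1
      · rw [rSeq_neg (show i < 1 by omega)]; exact le_top
      rcases le_or_gt (i + (s : ℤ)) (d : ℤ) with h2 | h2
      · rw [hrP _ h1 h2]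
        have h3 := hU1 (i + s) h1 h2
        have heq : i + (s : ℤ) - s = i := by ring
        rwa [heq] at h3
      · rw [hrPbot _ h2]; exact bot_le
    · rcases lt_or_ge (i - (t : ℤ)) 1 with h1 | h1
      · rw [rSeq_neg h1]; exact le_top
      rcases le_or_gt (i - (t : ℤ)) (d : ℤ) with h2 | h2
      · rw [hrP _ h1 h2]
        have h3 := hL1 (i - t) h1
        have heq : i - (t : ℤ) + t = i := by ring
        rwa [heq] at h3
      · rw [hrPbot _ h2, rSeq_bot hfc (show (f.natDegree : ℤ) < i by omega)]
  -- PQInt (p-s) (q-t) h g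
  case _ =>
    intro i
    have hps : ((p - s : ℕ) : ℤ) = (p : ℤ) - s := by omega
    have hqt : ((q - t : ℕ) : ℤ) = (q : ℤ) - t := by omega
    rw [hps, hqt]
    rcases lt_or_ge i 1 with h1 | h1
    · rw [rSeq_neg (f := ((L : Multiset ℝ).map fun a => X - C a).prod) h1,
        rSeq_neg (f := g) (show i - ((q : ℤ) - t) < 1 by omega)]
      exact ⟨le_top, le_refl _⟩
    rcases le_or_gt i (d : ℤ) with h2 | h2
    · rw [hrP _ h1 h2]
      constructor
      · have h3 := hL2 i h1
        have heq : i + ((p : ℤ) - s) = i + p - s := by ring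
        rwa [heq]
      · have h3 := hU2 i h1 h2
        have heq : i - ((q : ℤ) - t) = i - q + t := by ring
        rwa [heq]
    · rw [hrPbot _ h2]
      refine ⟨?_, bot_le⟩
      rw [rSeq_bot hgc (show (g.natDegree : ℤ) < i + ((p : ℤ) - s) by omega)]
end

section
/- If f (p,q)-interlaces g, then the derivative f' (p,q)-interlaces the derivative g'. -/
open Polynomial Multiset

section Helpers

lemma sorted_get_iff (P : ℝ → Prop) [DecidablePred P]
    (hP : ∀ x y, x ≤ y → P x → P y) :
    ∀ (L : List ℝ), L.Pairwise (· ≥ ·) → ∀ (i : ℕ) (h : i < L.length),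
      (P (L.get ⟨i, h⟩) ↔ i < L.countP (fun x => decide (P x))) := by
  intro L
  induction L with
  | nil => intro _ i h; simp at h
  | cons x xs ih =>
    intro hs i h
    have hxs : xs.Pairwise (· ≥ ·) := hs.of_cons
    by_cases hPx : P x
    · have hc : (x :: xs).countP (fun x => decide (P x)) =
        xs.countP (fun x => decide (P x)) + 1 := by
        rw [List.countP_cons]; simp [hPx]
      cases i with
      | zero => simpa [hc] using hPx
      | succ j =>
        have hj : j < xs.length := by simpa using h
        have := ih hxs j hj
        simp only [List.get_cons_succ, hc]
        rw [this]; omega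
    · have hall : ∀ y ∈ xs, ¬ P y := by
        intro y hy hPy
        exact hPx (hP y x (List.rel_of_pairwise_cons hs hy) hPy)
      have hc0 : xs.countP (fun x => decide (P x)) = 0 := by
        rw [List.countP_eq_zero]; intro y hy; simpa using hall y hy
      have hc : (x :: xs).countP (fun x => decide (P x)) = 0 := by
        rw [List.countP_cons]; simp [hPx, hc0]
      cases i with
      | zero => simpa [hc] using hPx
      | succ j =>
        have hj : j < xs.length := by simpa using h
        simp only [List.get_cons_succ, hc]
        constructor
        · intro hPy; exact absurd hPy (hall _ (List.get_mem _ _))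
        · omega

lemma le_seqOf_iff (L : List ℝ) (hL : L.Pairwise (· ≥ ·)) (t : ℝ) (i : ℤ) :
    ((t : EReal) ≤ seqOf L i) ↔ i ≤ L.countP (fun x => decide (t ≤ x)) := by
  unfold seqOf
  by_cases hi : i < 1
  · simp only [if_pos hi, le_top, true_iff]; omega
  · rw [if_neg hi]
    set j := (i - 1).toNat with hj
    have hij : i = (j : ℤ) + 1 := by omega
    by_cases hlen : j < L.length
    · rw [List.getElem?_eq_getElem hlen]
      simp only [Option.elim]
      rw [EReal.coe_le_coe_iff]
      have := sorted_get_iff (fun x => t ≤ x) (fun x y hxy hx => le_trans hx hxy) L hL j hlen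
      rw [show ((t ≤ L[j]) ↔ _) from this]
      omega
    · rw [List.getElem?_eq_none (by omega)]
      simp only [Option.elim]
      have hcnt : L.countP (fun x => decide (t ≤ x)) ≤ L.length := List.countP_le_length
      constructor
      · intro hle; exact absurd hle (by simp)
      · intro hle; omega

lemma EReal.le_iff_forall_real (x y : EReal) :
    x ≤ y ↔ ∀ t : ℝ, (t : EReal) ≤ x → (t : EReal) ≤ y := by
  constructor
  · exact fun h t ht => le_trans ht h
  · intro h
    induction x using EReal.rec with
    | bot => exact bot_le
    | coe a => exact h a le_rfl
    | top =>
      induction y using EReal.rec with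
      | bot => simpa using h 0 le_top
      | coe b =>
        have := h (b + 1) le_top
        rw [EReal.coe_le_coe_iff] at this; linarith
      | top => exact le_rfl

lemma countP_sort_eq (m : Multiset ℝ) (P : ℝ → Prop) [DecidablePred P] :
    (m.sort (· ≥ ·)).countP (fun x => decide (P x)) = Multiset.card (m.filter P) := by
  conv_rhs => rw [← Multiset.sort_eq m (· ≥ ·)]
  rw [Multiset.filter_coe, Multiset.coe_card, List.countP_eq_length_filter]

lemma nRoots_eq_countP (f : Polynomial ℝ) (t : ℝ) :
    nRoots f t = (f.roots.sort (· ≥ ·)).countP (fun x => decide (t ≤ x)) :=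
  (countP_sort_eq _ _).symm

lemma le_rSeq_iff (f : Polynomial ℝ) (t : ℝ) (i : ℤ) :
    ((t : EReal) ≤ rSeq f i) ↔ i ≤ nRoots f t := by
  rw [rSeq, le_seqOf_iff _ (Multiset.pairwise_sort _ _), nRoots_eq_countP]

lemma seq_le_iff_count (f g : Polynomial ℝ) (q : ℕ) :
    (∀ i : ℤ, rSeq f i ≤ rSeq g (i - q)) ↔ (∀ t : ℝ, nRoots f t ≤ nRoots g t + q) := by
  constructor
  · intro h t
    rcases Nat.eq_zero_or_pos (nRoots f t) with h0 | hpos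
    · omega
    · have h1 : ((nRoots f t : ℤ)) ≤ nRoots f t := le_refl _
      have h2 : (t : EReal) ≤ rSeq f (nRoots f t) := (le_rSeq_iff f t _).2 h1
      have h3 := le_trans h2 (h (nRoots f t))
      have h4 := (le_rSeq_iff g t _).1 h3
      omega
  · intro h i
    rw [EReal.le_iff_forall_real]
    intro t ht
    rw [le_rSeq_iff] at ht ⊢
    have := h t
    omega

lemma card_filter_roots_le_derivative (p : ℝ[X]) (P : ℝ → Prop) [DecidablePred P]
    (hP : ∀ ⦃x y z : ℝ⦄, P x → P y → x ≤ z → z ≤ y → P z) :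
    Multiset.card (p.roots.filter P) ≤ Multiset.card ((derivative p).roots.filter P) + 1 := by
  rcases eq_or_ne p 0 with rfl | hp
  · simp
  rcases eq_or_ne (derivative p) 0 with hp' | hp'
  · have hdeg : p.natDegree = 0 := natDegree_eq_zero_of_derivative_eq_zero hp'
    have : Multiset.card p.roots = 0 := le_antisymm (hdeg ▸ p.card_roots') (Nat.zero_le _)
    have hride : p.roots = 0 := Multiset.card_eq_zero.1 this
    simp [hride]
  set S := p.roots.filter P with hS
  set SF := (derivative p).roots.filter P with hSF
  have hinter : S.toFinset.card ≤ (SF.toFinset \ S.toFinset).card + 1 := by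
    refine Finset.card_le_diff_of_interleaved fun x hx y hy hxy _ => ?_
    rw [Multiset.mem_toFinset, hS, Multiset.mem_filter, mem_roots hp] at hx hy
    obtain ⟨z, hz1, hz2⟩ := exists_deriv_eq_zero hxy p.continuousOn (hx.1.trans hy.1.symm)
    refine ⟨z, ?_, hz1⟩
    rw [Multiset.mem_toFinset, hSF, Multiset.mem_filter, mem_roots hp']
    exact ⟨by rwa [IsRoot, ← p.deriv], hP hx.2 hy.2 hz1.1.le hz1.2.le⟩
  have hcount : ∀ x ∈ S.toFinset, S.count x ≤ SF.count x + 1 := by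
    intro x hx
    rw [Multiset.mem_toFinset, hS, Multiset.mem_filter] at hx
    rw [hS, hSF, Multiset.count_filter, Multiset.count_filter, if_pos hx.2, if_pos hx.2,
      count_roots, count_roots]
    have := p.rootMultiplicity_sub_one_le_derivative_rootMultiplicity x
    omega
  calc Multiset.card S = ∑ x ∈ S.toFinset, S.count x := (Multiset.toFinset_sum_count_eq _).symm
    _ ≤ ∑ x ∈ S.toFinset, (SF.count x + 1) := Finset.sum_le_sum hcount
    _ = (∑ x ∈ S.toFinset, SF.count x) + S.toFinset.card := by
        rw [Finset.sum_add_distrib, Finset.card_eq_sum_ones]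
    _ ≤ (∑ x ∈ S.toFinset, SF.count x) + ((SF.toFinset \ S.toFinset).card + 1) := by omega
    _ ≤ (∑ x ∈ S.toFinset, SF.count x) +
        ((∑ x ∈ SF.toFinset \ S.toFinset, SF.count x) + 1) := by
        have : (SF.toFinset \ S.toFinset).card ≤ ∑ x ∈ SF.toFinset \ S.toFinset, SF.count x := by
          rw [Finset.card_eq_sum_ones]
          refine Finset.sum_le_sum fun x hx => ?_
          have hx' : x ∈ SF.toFinset := (Finset.mem_sdiff.1 hx).1
          rw [Multiset.mem_toFinset] at hx'
          exact Nat.one_le_iff_ne_zero.2 (Multiset.count_ne_zero.2 hx')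
        omega
    _ = (∑ x ∈ S.toFinset ∪ (SF.toFinset \ S.toFinset), SF.count x) + 1 := by
        rw [Finset.sum_union Finset.disjoint_sdiff]; omega
    _ ≤ (∑ x ∈ SF.toFinset, SF.count x) + 1 := by
        refine Nat.add_le_add_right ?_ 1
        refine Finset.sum_le_sum_of_ne_zero fun x hx hne => ?_
        rwa [Multiset.mem_toFinset, ← Multiset.count_ne_zero]
    _ = Multiset.card SF + 1 := by rw [Multiset.toFinset_sum_count_eq]

lemma eval_derivative_multiset_prod (R : Multiset ℝ) (s : ℝ) (h : ∀ r ∈ R, s ≠ r) :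
    eval s (derivative (R.map (fun r => X - C r)).prod) =
      eval s ((R.map fun r => X - C r).prod) * (R.map fun r => (s - r)⁻¹).sum := by
  induction R using Multiset.induction_on with
  | empty => simp
  | cons r R ih =>
    have hr : s - r ≠ 0 := sub_ne_zero.2 (h r (Multiset.mem_cons_self r R))
    have ih' := ih (fun x hx => h x (Multiset.mem_cons_of_mem hx))
    rw [Multiset.map_cons, Multiset.prod_cons, derivative_mul, Multiset.map_cons,
      Multiset.sum_cons]
    simp only [eval_add, eval_mul, eval_sub, eval_X, eval_C, derivative_sub, derivative_X,
      derivative_C, sub_zero, eval_one, ih', Multiset.prod_cons, Multiset.map_cons]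
    field_simp

lemma list_sum_map_eq_range (φ : ℝ → ℝ) (L : List ℝ) :
    (L.map φ).sum = ∑ i ∈ Finset.range L.length, φ (L.getD i 0) := by
  induction L with
  | nil => simp
  | cons x xs ih =>
    rw [List.map_cons, List.sum_cons, List.length_cons, Finset.sum_range_succ', ih]
    simp [add_comm]

lemma sum_inv_compare (s : ℝ) (q K L : ℕ) (A B : List ℝ)
    (hKA : A.countP (fun x => decide (s < x)) = K)
    (hLB : B.countP (fun x => decide (s < x)) = L)
    (hKL : K = L + q)
    (hlen : A.length ≤ B.length + q)
    (hA : A.Pairwise (· ≥ ·)) (hB : B.Pairwise (· ≥ ·))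
    (hAs : ∀ x ∈ A, x ≠ s) (hBs : ∀ x ∈ B, x ≠ s)
    (hpair : ∀ j : ℕ, j + q < A.length → j < B.length → A.getD (j+q) 0 ≤ B.getD j 0) :
    (A.map fun r => (s - r)⁻¹).sum ≤ (B.map fun r => (s - r)⁻¹).sum := by
  set N := A.length with hN
  set M := B.length with hM
  have hKN : K ≤ N := hKA ▸ A.countP_le_length
  have hLM : L ≤ M := hLB ▸ B.countP_le_length
  have hsideA : ∀ i, i < N → (s < A.getD i 0 ↔ i < K) := by
    intro i hi
    rw [List.getD_eq_get A 0 ⟨i, hi⟩, sorted_get_iff (fun x => s < x)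
      (fun x y hxy hx => lt_of_lt_of_le hx hxy) A hA i hi, hKA]
  have hsideB : ∀ j, j < M → (s < B.getD j 0 ↔ j < L) := by
    intro j hj
    rw [List.getD_eq_get B 0 ⟨j, hj⟩, sorted_get_iff (fun x => s < x)
      (fun x y hxy hx => lt_of_lt_of_le hx hxy) B hB j hj, hLB]
  have hAne : ∀ i, i < N → A.getD i 0 ≠ s := by
    intro i hi; rw [List.getD_eq_get A 0 ⟨i, hi⟩]; exact hAs _ (List.get_mem _ _)
  have hBne : ∀ j, j < M → B.getD j 0 ≠ s := by
    intro j hj; rw [List.getD_eq_get B 0 ⟨j, hj⟩]; exact hBs _ (List.get_mem _ _)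
  rw [list_sum_map_eq_range, list_sum_map_eq_range, ← hN, ← hM]
  have hqN : q ≤ N := le_trans (by omega) hKN
  calc ∑ i ∈ Finset.range N, (s - A.getD i 0)⁻¹
      = ∑ i ∈ Finset.Ico 0 q, (s - A.getD i 0)⁻¹
        + ∑ i ∈ Finset.Ico q N, (s - A.getD i 0)⁻¹ := by
        rw [Finset.sum_Ico_consecutive _ (Nat.zero_le q) hqN, Finset.range_eq_Ico]
    _ ≤ ∑ i ∈ Finset.Ico q N, (s - A.getD i 0)⁻¹ := by
        have : ∑ i ∈ Finset.Ico 0 q, (s - A.getD i 0)⁻¹ ≤ 0 := by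
          refine Finset.sum_nonpos fun i hi => ?_
          rw [Finset.mem_Ico] at hi
          have hiN : i < N := lt_of_lt_of_le (lt_of_lt_of_le hi.2 (by omega)) hKN
          have : s < A.getD i 0 := (hsideA i hiN).2 (by omega)
          exact inv_nonpos.2 (by linarith)
        linarith
    _ = ∑ j ∈ Finset.range (N - q), (s - A.getD (q + j) 0)⁻¹ :=
        Finset.sum_Ico_eq_sum_range _ _ _
    _ ≤ ∑ j ∈ Finset.range (N - q), (s - B.getD j 0)⁻¹ := by
        refine Finset.sum_le_sum fun j hj => ?_
        rw [Finset.mem_range] at hj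
        have hjq : q + j < N := by omega
        have hjM : j < M := by omega
        have hle : A.getD (q + j) 0 ≤ B.getD j 0 := by
          rw [Nat.add_comm q j]; exact hpair j (by omega) hjM
        set x := A.getD (q + j) 0
        set y := B.getD j 0
        rcases lt_or_ge j L with hjL | hjL
        · have hy : s < y := (hsideB j hjM).2 hjL
          have hx : s < x := (hsideA _ hjq).2 (by omega)
          have h1 : s - y ≤ s - x := by linarith
          have h2 : s - x < 0 := by linarith
          rw [inv_eq_one_div, inv_eq_one_div]
          exact one_div_le_one_div_of_neg_of_le h2 h1
        · have hny : ¬ s < y := fun hc => by have := (hsideB j hjM).1 hc; omega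
          have hy : y < s := lt_of_le_of_ne (le_of_not_gt hny) (hBne j hjM)
          have hnx : ¬ s < x := fun hc => by have := (hsideA _ hjq).1 hc; omega
          have hx : x < s := lt_of_le_of_ne (le_of_not_gt hnx) (hAne _ hjq)
          have h1 : 0 < s - y := by linarith
          have h2 : s - y ≤ s - x := by linarith
          rw [inv_eq_one_div, inv_eq_one_div]
          exact one_div_le_one_div_of_le h1 h2
    _ ≤ ∑ j ∈ Finset.range M, (s - B.getD j 0)⁻¹ := by
        refine Finset.sum_le_sum_of_subset_of_nonneg
          (Finset.range_subset_range.2 (by omega)) fun j hj hj' => ?_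
        rw [Finset.mem_range] at hj
        have hjL : L ≤ j := by
          rw [Finset.mem_range, not_lt] at hj'
          omega
        have : ¬ s < B.getD j 0 := fun hc => by have := (hsideB j hj).1 hc; omega
        have hy : B.getD j 0 < s := lt_of_le_of_ne (le_of_not_gt this) (hBne j hj)
        exact le_of_lt (inv_pos.2 (by linarith))

lemma card_filter_add (m : Multiset ℝ) (P : ℝ → Prop) [DecidablePred P] :
    Multiset.card (m.filter P) + Multiset.card (m.filter (fun x => ¬ P x)) =
      Multiset.card m := by
  rw [← Multiset.card_add, Multiset.filter_add_not]

lemma exists_min_multiset (m : Multiset ℝ) (hm : m ≠ 0) : ∃ a ∈ m, ∀ b ∈ m, a ≤ b := by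
  have hne : m.toFinset.Nonempty := by
    obtain ⟨x, hx⟩ := Multiset.exists_mem_of_ne_zero hm
    exact ⟨x, Multiset.mem_toFinset.2 hx⟩
  refine ⟨m.toFinset.min' hne, Multiset.mem_toFinset.1 (m.toFinset.min'_mem hne),
    fun b hb => m.toFinset.min'_le b (Multiset.mem_toFinset.2 hb)⟩

lemma seqOf_coe (L : List ℝ) (n : ℕ) (h : n < L.length) :
    seqOf L ((n : ℤ) + 1) = ((L.getD n 0 : ℝ) : EReal) := by
  unfold seqOf
  rw [if_neg (by omega)]
  have : ((n : ℤ) + 1 - 1).toNat = n := by omega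
  rw [this, List.getElem?_eq_getElem h, List.getD_eq_getElem _ _ h]
  rfl

lemma multiset_sum_sort (m : Multiset ℝ) (φ : ℝ → ℝ) :
    (m.map φ).sum = ((m.sort (· ≥ ·)).map φ).sum := by
  conv_lhs => rw [← Multiset.sort_eq m (· ≥ ·)]
  rw [Multiset.map_coe, Multiset.sum_coe]

end Helpers

lemma nRoots_split_eq (m : Multiset ℝ) (a : ℝ) :
    Multiset.card (m.filter (fun x => a ≤ x)) =
      m.count a + Multiset.card (m.filter (fun x => a < x)) := by
  have h1 := card_filter_add (m.filter (fun x => a ≤ x)) (fun x => a < x)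
  have h2 : (m.filter (fun x => a ≤ x)).filter (fun x => a < x) =
      m.filter (fun x => a < x) := by
    rw [Multiset.filter_filter]
    exact Multiset.filter_congr (fun x _ => by constructor <;> intro h <;>
      [exact h.1; exact ⟨h, le_of_lt h⟩])
  have h3 : (m.filter (fun x => a ≤ x)).filter (fun x => ¬ a < x) =
      m.filter (fun x => a = x) := by
    rw [Multiset.filter_filter]
    exact Multiset.filter_congr (fun x _ => by
      constructor
      · rintro ⟨h1', h2'⟩; exact le_antisymm h2' (not_lt.1 h1')
      · intro h; exact ⟨not_lt.2 h.ge, h.le⟩)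
  rw [h2, h3] at h1
  rw [Multiset.count_eq_card_filter_eq]
  omega

lemma derivCount (f g : Polynomial ℝ) (hf : RR f) (hg : RR g) (q : ℕ)
    (hfg : ∀ t : ℝ, nRoots f t ≤ nRoots g t + q)
    (hseq : ∀ i : ℤ, rSeq f i ≤ rSeq g (i - q)) :
    ∀ t : ℝ, nRoots (Polynomial.derivative f) t ≤ nRoots (Polynomial.derivative g) t + q := by
  intro t
  by_contra hcon
  push_neg at hcon
  set F := derivative f with hFdef
  set G := derivative g with hGdef
  have hf0 : f ≠ 0 := fun h => by
    have := hf.1; rw [h, leadingCoeff_zero] at this; exact lt_irrefl 0 this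
  have hg0 : g ≠ 0 := fun h => by
    have := hg.1; rw [h, leadingCoeff_zero] at this; exact lt_irrefl 0 this
  -- F ≠ 0
  have hFpos : 0 < nRoots F t := by omega
  have hF0 : F ≠ 0 := by
    intro h
    rw [nRoots, h, roots_zero, Multiset.filter_zero] at hFpos
    simp at hFpos
  have hdfne : f.natDegree ≠ 0 := fun h0 =>
    hF0 (by rw [hFdef, Polynomial.eq_C_of_natDegree_eq_zero h0, derivative_C])
  set N := f.natDegree with hNdef
  have hcardf : Multiset.card f.roots = N := hf.2
  have hcardF : Multiset.card F.roots = N - 1 := by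
    have h1 : Multiset.card f.roots ≤ Multiset.card F.roots + 1 :=
      card_roots_le_derivative f
    have h2 : Multiset.card F.roots ≤ F.natDegree := F.card_roots'
    have h3 : F.natDegree ≤ N - 1 := natDegree_derivative_le f
    omega
  -- basic counting facts
  have fc : ∀ (h : Polynomial ℝ) (t' : ℝ), nRoots h t' ≤ nRoots (derivative h) t' + 1 := by
    intro h t'
    exact card_filter_roots_le_derivative h (fun x => t' ≤ x)
      (fun x y z hx _ hxz _ => le_trans hx hxz)
  have fa : nRoots F t ≤ nRoots f t := by
    have s1 := card_filter_add F.roots (fun x => t ≤ x)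
    have s2 := card_filter_add f.roots (fun x => t ≤ x)
    have s3 : Multiset.card (f.roots.filter (fun x => ¬ t ≤ x)) ≤
        Multiset.card (F.roots.filter (fun x => ¬ t ≤ x)) + 1 :=
      card_filter_roots_le_derivative f (fun x => ¬ t ≤ x)
        (fun x y z _ hy _ hzy h' => hy (le_trans h' hzy))
    have e4 : nRoots F t = Multiset.card (F.roots.filter (fun x => t ≤ x)) := rfl
    have e5 : nRoots f t = Multiset.card (f.roots.filter (fun x => t ≤ x)) := rfl
    omega
  have hfgt := hfg t
  have hfct : nRoots f t ≤ nRoots F t + 1 := fc f t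
  have hgct : nRoots g t ≤ nRoots G t + 1 := fc g t
  -- tightness
  have e1 : nRoots F t = nRoots f t := by omega
  have e2 : nRoots f t = nRoots g t + q := by omega
  have e3 : nRoots g t = nRoots G t + 1 := by omega
  have hngpos : 0 < nRoots g t := by omega
  have hnfpos : 0 < nRoots f t := by omega
  have hdgne : g.natDegree ≠ 0 := by
    intro h0
    have : Multiset.card g.roots = 0 := by rw [hg.2, h0]
    have hr0 : g.roots = 0 := Multiset.card_eq_zero.1 this
    rw [nRoots, hr0, Multiset.filter_zero] at hngpos
    simp at hngpos
  have hG0 : G ≠ 0 := fun h =>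
    hdgne (natDegree_eq_zero_of_derivative_eq_zero h)
  -- minimal elements
  have hgne : g.roots.filter (fun x => t ≤ x) ≠ 0 := by
    intro h; rw [nRoots, h] at hngpos; simp at hngpos
  obtain ⟨c, hcmem, hcmin⟩ := exists_min_multiset _ hgne
  rw [Multiset.mem_filter] at hcmem
  have hcmin' : ∀ ρ ∈ g.roots, t ≤ ρ → c ≤ ρ := fun ρ hρ ht' =>
    hcmin ρ (Multiset.mem_filter.2 ⟨hρ, ht'⟩)
  have hfne : f.roots.filter (fun x => t ≤ x) ≠ 0 := by
    intro h; rw [nRoots, h] at hnfpos; simp at hnfpos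
  obtain ⟨a, hamem, hamin⟩ := exists_min_multiset _ hfne
  rw [Multiset.mem_filter] at hamem
  have hamin' : ∀ ρ ∈ f.roots, t ≤ ρ → a ≤ ρ := fun ρ hρ ht' =>
    hamin ρ (Multiset.mem_filter.2 ⟨hρ, ht'⟩)
  have hFne : F.roots.filter (fun x => t ≤ x) ≠ 0 := by
    intro h; rw [nRoots, h] at hFpos; simp at hFpos
  obtain ⟨s, hsmem, hsmin⟩ := exists_min_multiset _ hFne
  rw [Multiset.mem_filter] at hsmem
  have hsmin' : ∀ ρ ∈ F.roots, t ≤ ρ → s ≤ ρ := fun ρ hρ ht' =>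
    hsmin ρ (Multiset.mem_filter.2 ⟨hρ, ht'⟩)
  -- Claim 1 : no root of G in [t, c)
  have hGc : ∀ x ∈ G.roots, t ≤ x → c ≤ x := by
    by_contra hco
    push_neg at hco
    obtain ⟨x, hxG, hxt, hxc⟩ := hco
    have key1 : nRoots G c + 1 ≤ nRoots G t := by
      have hsplit := card_filter_add (G.roots.filter (fun y => t ≤ y)) (fun y => c ≤ y)
      have hff : (G.roots.filter (fun y => t ≤ y)).filter (fun y => c ≤ y) =
          G.roots.filter (fun y => c ≤ y) := by
        rw [Multiset.filter_filter]
        exact Multiset.filter_congr (fun y _ => by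
          constructor
          · exact fun h => h.1
          · exact fun h => ⟨h, le_trans hcmem.2 h⟩)
      have hxmem : x ∈ (G.roots.filter (fun y => t ≤ y)).filter (fun y => ¬ c ≤ y) :=
        Multiset.mem_filter.2 ⟨Multiset.mem_filter.2 ⟨hxG, hxt⟩, not_le.2 hxc⟩
      have hpos : 0 < Multiset.card
          ((G.roots.filter (fun y => t ≤ y)).filter (fun y => ¬ c ≤ y)) :=
        Multiset.card_pos.2 (fun h => by rw [h] at hxmem; simp at hxmem)
      have e4 : nRoots G t = Multiset.card (G.roots.filter (fun y => t ≤ y)) := rfl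
      have e5 : nRoots G c = Multiset.card (G.roots.filter (fun y => c ≤ y)) := rfl
      rw [hff] at hsplit
      omega
    have key2 : nRoots g c ≤ nRoots G c + 1 := fc g c
    have key3 : nRoots g c = nRoots g t := by
      unfold nRoots
      congr 1
      exact Multiset.filter_congr (fun ρ hρ => by
        constructor
        · exact fun h => le_trans hcmem.2 h
        · exact fun h => hcmin' ρ hρ h)
    omega
  -- Claim 3 : a ≤ c
  have hac : a ≤ c := by
    by_contra hca
    push_neg at hca
    have key1 : nRoots g a + 1 ≤ nRoots g t := by
      have hsplit := card_filter_add (g.roots.filter (fun y => t ≤ y)) (fun y => a ≤ y)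
      have hff : (g.roots.filter (fun y => t ≤ y)).filter (fun y => a ≤ y) =
          g.roots.filter (fun y => a ≤ y) := by
        rw [Multiset.filter_filter]
        exact Multiset.filter_congr (fun y _ => by
          constructor
          · exact fun h => h.1
          · exact fun h => ⟨h, le_trans hamem.2 h⟩)
      have hxmem : c ∈ (g.roots.filter (fun y => t ≤ y)).filter (fun y => ¬ a ≤ y) :=
        Multiset.mem_filter.2 ⟨Multiset.mem_filter.2 ⟨hcmem.1, hcmem.2⟩, not_le.2 hca⟩
      have hpos : 0 < Multiset.card
          ((g.roots.filter (fun y => t ≤ y)).filter (fun y => ¬ a ≤ y)) :=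
        Multiset.card_pos.2 (fun h => by rw [h] at hxmem; simp at hxmem)
      have e4 : nRoots g t = Multiset.card (g.roots.filter (fun y => t ≤ y)) := rfl
      have e5 : nRoots g a = Multiset.card (g.roots.filter (fun y => a ≤ y)) := rfl
      rw [hff] at hsplit
      omega
    have key2 : nRoots f a = nRoots f t := by
      unfold nRoots
      congr 1
      exact Multiset.filter_congr (fun ρ hρ => by
        constructor
        · exact fun h => le_trans hamem.2 h
        · exact fun h => hamin' ρ hρ h)
    have key3 := hfg a
    omega
  -- Claim 5 : s < a
  have hsa : s < a := by
    by_contra has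
    push_neg at has
    have eF : nRoots F t = nRoots F a := by
      unfold nRoots
      congr 1
      exact Multiset.filter_congr (fun ρ hρ => by
        constructor
        · exact fun h => le_trans has (hsmin' ρ hρ h)
        · exact fun h => le_trans hamem.2 h)
    have ef : nRoots f t = nRoots f a := by
      unfold nRoots
      congr 1
      exact Multiset.filter_congr (fun ρ hρ => by
        constructor
        · exact fun h => hamin' ρ hρ h
        · exact fun h => le_trans hamem.2 h)
    have hsplF : nRoots F a = F.roots.count a +
        Multiset.card (F.roots.filter (fun x => a < x)) := nRoots_split_eq _ _
    have hsplf : nRoots f a = f.roots.count a +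
        Multiset.card (f.roots.filter (fun x => a < x)) := nRoots_split_eq _ _
    have hmult : F.roots.count a = f.roots.count a - 1 := by
      rw [count_roots, count_roots, hFdef,
        derivative_rootMultiplicity_of_root (isRoot_of_mem_roots hamem.1)]
    have hmultpos : 1 ≤ f.roots.count a := Multiset.one_le_count_iff_mem.2 hamem.1
    have hgt : Multiset.card (F.roots.filter (fun x => a < x)) ≤
        Multiset.card (f.roots.filter (fun x => a < x)) := by
      have s1 := card_filter_add F.roots (fun x => a < x)
      have s2 := card_filter_add f.roots (fun x => a < x)
      have s3 : Multiset.card (f.roots.filter (fun x => ¬ a < x)) ≤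
          Multiset.card (F.roots.filter (fun x => ¬ a < x)) + 1 :=
        card_filter_roots_le_derivative f (fun x => ¬ a < x)
          (fun x y z _ hy _ hzy h' => hy (lt_of_lt_of_le h' hzy))
      omega
    omega
  -- s is not a root of f, nor of g
  have hs_not_f : s ∉ f.roots := fun hmem =>
    absurd (hamin' s hmem hsmem.2) (not_le.2 hsa)
  have hsne_f : ∀ r ∈ f.roots, s ≠ r := fun r hr he => hs_not_f (he ▸ hr)
  have hsc : s < c := lt_of_lt_of_le hsa hac
  have hs_not_g : s ∉ g.roots := fun hmem =>
    absurd (hcmin' s hmem hsmem.2) (not_le.2 hsc)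
  have hsne_g : ∀ r ∈ g.roots, s ≠ r := fun r hr he => hs_not_g (he ▸ hr)
  -- the sum of reciprocals for f at s vanishes
  have hprodf := C_leadingCoeff_mul_prod_multiset_X_sub_C hf.2
  have hevalf : eval s f = f.leadingCoeff * eval s ((f.roots.map fun a => X - C a).prod) := by
    conv_lhs => rw [← hprodf]
    simp [eval_mul]
  have hevalfne : eval s f ≠ 0 := fun h => hs_not_f ((mem_roots hf0).2 h)
  have hFs : eval s F = 0 := isRoot_of_mem_roots hsmem.1
  have hFeval : eval s F =
      f.leadingCoeff * (eval s ((f.roots.map fun a => X - C a).prod) *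
        (f.roots.map fun r => (s - r)⁻¹).sum) := by
    conv_lhs => rw [hFdef, ← hprodf, derivative_C_mul]
    rw [eval_mul, eval_C, eval_derivative_multiset_prod _ _ hsne_f]
  have hlcne : f.leadingCoeff ≠ 0 := ne_of_gt hf.1
  have hPne : eval s ((f.roots.map fun a => X - C a).prod) ≠ 0 := by
    intro h
    rw [h, mul_zero] at hevalf
    exact hevalfne hevalf
  have hsumf : (f.roots.map fun r => (s - r)⁻¹).sum = 0 := by
    rw [hFs] at hFeval
    rcases mul_eq_zero.1 hFeval.symm with h | h
    · exact absurd h hlcne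
    · rcases mul_eq_zero.1 h with h' | h'
      · exact absurd h' hPne
      · exact h'
  -- sum comparison: the g-sum at s is ≥ 0
  have hfiltf : f.roots.filter (fun x => s < x) = f.roots.filter (fun x => t ≤ x) := by
    refine Multiset.filter_congr (fun ρ hρ => ?_)
    constructor
    · intro h
      by_contra hnt
      push_neg at hnt
      linarith [hsmem.2]
    · intro h
      exact lt_of_lt_of_le hsa (hamin' ρ hρ h)
  have hfiltg : g.roots.filter (fun x => s < x) = g.roots.filter (fun x => t ≤ x) := by
    refine Multiset.filter_congr (fun ρ hρ => ?_)
    constructor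
    · intro h
      by_contra hnt
      push_neg at hnt
      linarith [hsmem.2]
    · intro h
      exact lt_of_lt_of_le hsc (hcmin' ρ hρ h)
  have hlenfg : Multiset.card f.roots ≤ Multiset.card g.roots + q := by
    have hne : f.roots + g.roots ≠ 0 := by
      intro h
      have : Multiset.card (f.roots + g.roots) = 0 := by rw [h]; rfl
      rw [Multiset.card_add] at this
      omega
    obtain ⟨t₀, ht₀mem, ht₀min⟩ := exists_min_multiset _ hne
    have h1 : f.roots.filter (fun x => t₀ ≤ x) = f.roots :=
      Multiset.filter_eq_self.2 (fun x hx => ht₀min x (Multiset.mem_add.2 (Or.inl hx)))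
    have h2 : g.roots.filter (fun x => t₀ ≤ x) = g.roots :=
      Multiset.filter_eq_self.2 (fun x hx => ht₀min x (Multiset.mem_add.2 (Or.inr hx)))
    have := hfg t₀
    rw [nRoots, nRoots, h1, h2] at this
    exact this
  have hsumcmp : (f.roots.map fun r => (s - r)⁻¹).sum ≤
      (g.roots.map fun r => (s - r)⁻¹).sum := by
    rw [multiset_sum_sort f.roots, multiset_sum_sort g.roots]
    refine sum_inv_compare s q (nRoots f t) (nRoots g t) _ _ ?_ ?_ e2 ?_
      (Multiset.pairwise_sort _ _) (Multiset.pairwise_sort _ _) ?_ ?_ ?_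
    · rw [countP_sort_eq, hfiltf]; rfl
    · rw [countP_sort_eq, hfiltg]; rfl
    · rw [Multiset.length_sort, Multiset.length_sort]; exact hlenfg
    · intro x hx
      exact fun he => hs_not_f (he ▸ (Multiset.mem_sort _).1 hx)
    · intro x hx
      exact fun he => hs_not_g (he ▸ (Multiset.mem_sort _).1 hx)
    · intro j hj1 hj2
      have hseqj := hseq (((j + q : ℕ) : ℤ) + 1)
      rw [Multiset.length_sort] at hj1 hj2
      have hbrw : (((j + q : ℕ) : ℤ) + 1 - q) = (((j : ℕ) : ℤ) + 1) := by push_cast; ring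
      rw [hbrw, rSeq, rSeq, seqOf_coe _ _ (by rwa [Multiset.length_sort]),
        seqOf_coe _ _ (by rwa [Multiset.length_sort]), EReal.coe_le_coe_iff] at hseqj
      exact hseqj
  have hsumg : 0 ≤ (g.roots.map fun r => (s - r)⁻¹).sum := by
    rw [hsumf] at hsumcmp; exact hsumcmp
  -- identities for g
  have hprodg := C_leadingCoeff_mul_prod_multiset_X_sub_C hg.2
  have hgne_at : ∀ x : ℝ, s ≤ x → x < c → ∀ ρ ∈ g.roots, x ≠ ρ := by
    intro x hx1 hx2 ρ hρ he
    subst he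
    exact absurd (hcmin' x hρ (le_trans (le_trans hsmem.2 hx1) le_rfl)) (not_le.2 hx2)
  have hGid : ∀ x : ℝ, (∀ ρ ∈ g.roots, x ≠ ρ) →
      eval x G = eval x g * (g.roots.map fun r => (x - r)⁻¹).sum := by
    intro x hx
    have h1 : eval x G =
        g.leadingCoeff * (eval x ((g.roots.map fun a => X - C a).prod) *
          (g.roots.map fun r => (x - r)⁻¹).sum) := by
      conv_lhs => rw [hGdef, ← hprodg, derivative_C_mul]
      rw [eval_mul, eval_C, eval_derivative_multiset_prod _ _ hx]
    have h2 : eval x g = g.leadingCoeff * eval x ((g.roots.map fun a => X - C a).prod) := by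
      conv_lhs => rw [← hprodg]
      simp [eval_mul]
    rw [h1, h2, mul_assoc]
  -- choose x₀ close to c
  set M' := Multiset.card g.roots with hM'def
  have hM'pos : 1 ≤ M' :=
    Multiset.card_pos.2 (fun h => Multiset.notMem_zero c (h ▸ hcmem.1))
    -- numeric setup
  set m := (M' : ℝ) with hmdef
  have hm1 : (1 : ℝ) ≤ m := by rw [hmdef]; exact_mod_cast hM'pos
  set w := c - s with hwdef
  have hw : 0 < w := by rw [hwdef]; linarith
  set x₀ := c - w / (2 * (m + 1)) with hx₀def
  have hden : (0:ℝ) < 2 * (m + 1) := by linarith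
  have hdpos : 0 < w / (2 * (m + 1)) := div_pos hw hden
  have hx₀c : x₀ < c := by rw [hx₀def]; linarith
  have hwdle : w / (2 * (m + 1)) ≤ w / 2 :=
    div_le_div_of_nonneg_left hw.le (by norm_num) (by linarith)
  have hsx₀ : s < x₀ := by
    rw [hx₀def]
    have : s = c - w := by rw [hwdef]; ring
    rw [this]
    have h2 : w / 2 < w := by linarith
    linarith
  have hx₀s2 : w / 2 ≤ x₀ - s := by
    rw [hx₀def, hwdef]; linarith [hwdle]
  -- sum at x₀ is negative
  have hterm : ∀ ρ ∈ g.roots.erase c, (x₀ - ρ)⁻¹ ≤ (x₀ - s)⁻¹ := by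
    intro ρ hρ
    have hρg : ρ ∈ g.roots := Multiset.mem_of_mem_erase hρ
    rcases lt_or_ge s ρ with hcase | hcase
    · have hcρ : c ≤ ρ := hcmin' ρ hρg (le_trans hsmem.2 hcase.le)
      have h1 : (x₀ - ρ)⁻¹ ≤ 0 := inv_nonpos.2 (by linarith)
      have h2 : (0:ℝ) ≤ (x₀ - s)⁻¹ := inv_nonneg.2 (by linarith)
      linarith
    · have hρs : ρ < s := lt_of_le_of_ne hcase (fun he => (hsne_g ρ hρg) he.symm)
      rw [inv_eq_one_div, inv_eq_one_div]
      exact one_div_le_one_div_of_le (by linarith) (by linarith)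
  have hsum_erase : ((g.roots.erase c).map fun r => (x₀ - r)⁻¹).sum ≤
      ((M' - 1 : ℕ) : ℝ) * (x₀ - s)⁻¹ := by
    calc ((g.roots.erase c).map fun r => (x₀ - r)⁻¹).sum
        ≤ ((g.roots.erase c).map fun _ => (x₀ - s)⁻¹).sum :=
          Multiset.sum_map_le_sum_map _ _ hterm
      _ = (Multiset.card (g.roots.erase c)) • (x₀ - s)⁻¹ := by
          rw [Multiset.map_const', Multiset.sum_replicate]
      _ = ((M' - 1 : ℕ) : ℝ) * (x₀ - s)⁻¹ := by
          rw [Multiset.card_erase_of_mem hcmem.1, nsmul_eq_mul]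
          rfl
  have hsumx₀ : (g.roots.map fun r => (x₀ - r)⁻¹).sum < 0 := by
    have hsplit : g.roots = c ::ₘ g.roots.erase c := (Multiset.cons_erase hcmem.1).symm
    rw [hsplit, Multiset.map_cons, Multiset.sum_cons]
    have hc_inv : (x₀ - c)⁻¹ = -((2 * (m + 1)) / w) := by
      rw [hx₀def, show c - w / (2 * (m + 1)) - c = -(w / (2 * (m + 1))) by ring,
        inv_neg, inv_div]
    have hs_inv : (x₀ - s)⁻¹ ≤ 2 / w := by
      rw [show (2:ℝ)/w = (w/2)⁻¹ by rw [inv_div], inv_eq_one_div, inv_eq_one_div]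
      exact one_div_le_one_div_of_le (by linarith) hx₀s2
    have hcast : ((M' - 1 : ℕ) : ℝ) = m - 1 := by
      rw [Nat.cast_sub hM'pos]; simp [hmdef]
    have hxspos : 0 < (x₀ - s)⁻¹ := inv_pos.2 (by linarith)
    have hb : ((M' - 1:ℕ):ℝ) * (x₀ - s)⁻¹ ≤ (m - 1) * (2 / w) := by
      rw [hcast]
      exact mul_le_mul_of_nonneg_left hs_inv (by linarith)
    have heq : -((2 * (m + 1)) / w) + (m - 1) * (2 / w) = -(4/w) := by
      field_simp
      ring
    have hlt : -(4/w) < 0 := neg_neg_iff_pos.2 (div_pos (by norm_num) hw)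
    have := le_trans hsum_erase hb
    linarith [hc_inv, heq]
  -- sign of G*g at s and x₀, and IVT
  have hGs_eval : 0 ≤ eval s (G * g) := by
    rw [eval_mul, hGid s hsne_g]
    rw [show eval s g * (g.roots.map fun r => (s - r)⁻¹).sum * eval s g
      = (eval s g)^2 * (g.roots.map fun r => (s - r)⁻¹).sum by ring]
    exact mul_nonneg (sq_nonneg _) hsumg
  have hx₀ne : ∀ ρ ∈ g.roots, x₀ ≠ ρ := hgne_at x₀ (by linarith) hx₀c
  have hgx₀ne : eval x₀ g ≠ 0 := fun h => hx₀ne _ ((mem_roots hg0).2 h) rfl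
  have hGx₀_eval : eval x₀ (G * g) < 0 := by
    rw [eval_mul, hGid x₀ hx₀ne]
    rw [show eval x₀ g * (g.roots.map fun r => (x₀ - r)⁻¹).sum * eval x₀ g
      = (eval x₀ g)^2 * (g.roots.map fun r => (x₀ - r)⁻¹).sum by ring]
    have hsq : 0 < (eval x₀ g)^2 := by positivity
    exact mul_neg_of_pos_of_neg hsq hsumx₀
  have hcont : ContinuousOn (fun x => eval x (G * g)) (Set.Icc s x₀) :=
    (G * g).continuousOn
  have hmem0 : (0:ℝ) ∈ Set.Icc (eval x₀ (G*g)) (eval s (G*g)) := ⟨hGx₀_eval.le, hGs_eval⟩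
  obtain ⟨x, hxIcc, hx0⟩ := intermediate_value_Icc' (le_of_lt hsx₀) hcont hmem0
  simp only at hx0
  rw [eval_mul] at hx0
  have hxs : s ≤ x := hxIcc.1
  have hxc : x < c := lt_of_le_of_lt hxIcc.2 hx₀c
  have hgx : eval x g ≠ 0 := fun h => hgne_at x hxs hxc _ ((mem_roots hg0).2 h) rfl
  have hGx : eval x G = 0 := by
    rcases mul_eq_zero.1 hx0 with h | h
    · exact h
    · exact absurd h hgx
  have hxG : x ∈ G.roots := (mem_roots hG0).2 hGx
  exact absurd (hGc x hxG (le_trans hsmem.2 hxs)) (not_le.2 hxc)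

theorem stmt6 (f g : Polynomial ℝ) (hf : RR f) (hg : RR g) (p q : ℕ)
    (h : PQInt p q f g) :
    PQInt p q (Polynomial.derivative f) (Polynomial.derivative g) := by
  have h2 : ∀ i : ℤ, rSeq f i ≤ rSeq g (i - q) := fun i => (h i).2
  have h1 : ∀ i : ℤ, rSeq g i ≤ rSeq f (i - p) := by
    intro i
    have := (h (i - p)).1
    rwa [sub_add_cancel] at this
  have hc2 := (seq_le_iff_count f g q).1 h2
  have hc1 := (seq_le_iff_count g f p).1 h1
  have hd2 := derivCount f g hf hg q hc2 h2
  have hd1 := derivCount g f hg hf p hc1 h1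
  have hs2 := (seq_le_iff_count (Polynomial.derivative f) (Polynomial.derivative g) q).2 hd2
  have hs1 := (seq_le_iff_count (Polynomial.derivative g) (Polynomial.derivative f) p).2 hd1
  intro i
  constructor
  · have := hs1 (i + p)
    rwa [add_sub_cancel_right] at this
  · exact hs2 i
end
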